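/- (Correctness of shift-XOR MSR decoding) Let α ≥ 1, k = α + 1, d = 2α, n ≥ k ≥ 2, L ≥ 1. Let (t_{i,j})_{1≤i≤n,1≤j≤α} and λ_1, …, λ_n be nonnegative integers such that the n×(2α) array with entries t_{i,j} (columns 1..α) and λ_i + t_{i,j−α} (columns α+1..2α) satisfies the RID property. Let S = (s_{v,u}) and T = (t'_{v,u}) be symmetric α×α matrices of binary sequences of length L, and for each node i define the α stored sequences Y^i_u = Σ_{j=1}^{α} z^{t_{i,j}} s_{j,u} + z^{λ_i} Σ_{j=1}^{α} z^{t_{i,j}} t'_{j,u}, u = 1, …, α. Then for any k distinct node indices i_1 > i_2 > … > i_k, the map from the pair of symmetric matrices (S, T) to the retrieved data (Y^{i_1}, …, Y^{i_k}) is injective; i.e., all B = α(α+1) message sequences are uniquely recoverable from any k nodes. -/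

import Mathlib

/-- An `n × d` array of integers `t` (1-indexed, values assumed nonnegative separately)
satisfies the refined increasing difference (RID) property if for all
`1 ≤ i < i' ≤ n` and `1 ≤ j < j' ≤ d` one has `0 ≤ t i j' - t i j < t i' j' - t i' j`,
where equality in the first inequality is allowed only when `i = 1`. -/
def RID (n d : ℕ) (t : ℕ → ℕ → ℤ) : Prop :=
  ∀ i i' j j' : ℕ, 1 ≤ i → i < i' → i' ≤ n → 1 ≤ j → j < j' → j' ≤ d →
    t i j ≤ t i j' ∧ (2 ≤ i → t i j < t i j') ∧ t i j' - t i j < t i' j' - t i' j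

/-- The combined `n × 2α` exponent array of the MSR generator matrix `Ψ = [Φ  ΛΦ]`:
columns `1..α` carry `t i j`, columns `α+1..2α` carry `λ i + t i (j-α)`. -/
def msrExp (α : ℕ) (t : ℕ → ℕ → ℤ) (lam : ℕ → ℤ) (i j : ℕ) : ℤ :=
  if j ≤ α then t i j else lam i + t i (j - α)

namespace Stmt13Aux
open Polynomial Matrix Finset


noncomputable section

abbrev F := RatFunc (ZMod 2)

instance : CharP F 2 :=
  charP_of_injective_algebraMap (RatFunc.algebraMap_injective (ZMod 2)) 2

lemma neg_eq (x : F) : -x = x := CharTwo.neg_eq x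

noncomputable def ξ (a : ℤ) : F := RatFunc.X ^ a

lemma ξ_add (a b : ℤ) : ξ (a + b) = ξ a * ξ b := zpow_add₀ RatFunc.X_ne_zero a b

lemma ξ_zero : ξ 0 = 1 := zpow_zero _

lemma ξ_ne_zero (a : ℤ) : ξ a ≠ 0 := zpow_ne_zero a RatFunc.X_ne_zero

lemma ξ_eq_alg (a : ℤ) (ha : 0 ≤ a) :
    ξ a = algebraMap (Polynomial (ZMod 2)) F (Polynomial.X ^ a.toNat) := by
  rw [map_pow, RatFunc.algebraMap_X, ξ, ← zpow_natCast, Int.toNat_of_nonneg ha]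

lemma ξ_sum {ι : Type*} {s : Finset ι} {f : ι → ℤ} :
    ξ (∑ i ∈ s, f i) = ∏ i ∈ s, ξ (f i) := by
  classical
  induction s using Finset.induction with
  | empty => simp [ξ_zero]
  | insert _ _ h ih => rw [Finset.sum_insert h, Finset.prod_insert h, ξ_add, ih]

lemma ξ_inj : Function.Injective ξ := by
  intro a b hab
  by_contra hne
  wlog hlt : b < a generalizing a b
  · exact this hab.symm (Ne.symm hne) (by omega)
  have h1 : ξ a = ξ b * ξ (a - b) := by rw [← ξ_add]; ring_nf
  have h2 : ξ (a - b) = 1 := by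
    have h1' : ξ b * ξ (a - b) = ξ b * 1 := by
      rw [mul_one]
      rw [hab] at h1
      exact h1.symm
    exact mul_left_cancel₀ (ξ_ne_zero b) h1'
  have h3 : 0 ≤ a - b := by omega
  rw [ξ_eq_alg _ h3] at h2
  have h4 : (Polynomial.X : Polynomial (ZMod 2)) ^ (a - b).toNat = 1 :=
    RatFunc.algebraMap_injective (ZMod 2) (by rw [h2, _root_.map_one])
  have h5 : (a - b).toNat = 0 := by
    have := congrArg Polynomial.natDegree h4
    simpa using this
  omega

noncomputable def χ : ZMod 2 →+* F :=
  (algebraMap (Polynomial (ZMod 2)) F).comp Polynomial.C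

noncomputable def seqF (L : ℕ) (x : ℤ → ZMod 2) : F :=
  ∑ m ∈ Finset.Icc (1 : ℤ) (L : ℤ), χ (x m) * ξ m

lemma shift_sum (L : ℕ) (x : ℤ → ZMod 2)
    (hsupp : ∀ l : ℤ, (l < 1 ∨ (L : ℤ) < l) → x l = 0)
    (a : ℤ) (R : Finset ℤ) (hR : Finset.Icc (1 + a) ((L : ℤ) + a) ⊆ R) :
    ∑ m ∈ R, χ (x (m - a)) * ξ m = ξ a * seqF L x := by
  have h1 : ∑ m ∈ R, χ (x (m - a)) * ξ m
      = ∑ m ∈ Finset.Icc (1 + a) ((L : ℤ) + a), χ (x (m - a)) * ξ m := by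
    refine (Finset.sum_subset hR fun m _ hm => ?_).symm
    have : x (m - a) = 0 := by
      apply hsupp
      simp only [Finset.mem_Icc, not_and_or, not_le] at hm
      omega
    rw [this, map_zero, zero_mul]
  rw [h1]
  have h2 : Finset.Icc (1 + a) ((L : ℤ) + a)
      = (Finset.Icc (1 : ℤ) (L : ℤ)).map (addRightEmbedding a) := by
    rw [Finset.map_add_right_Icc]
  rw [h2, Finset.sum_map, seqF, Finset.mul_sum]
  refine Finset.sum_congr rfl fun m _ => ?_
  simp only [addRightEmbedding_apply]
  rw [add_sub_cancel_right, add_comm m a, ξ_add]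
  ring

lemma seqF_eq_zero (L : ℕ) (x : ℤ → ZMod 2)
    (hsupp : ∀ l : ℤ, (l < 1 ∨ (L : ℤ) < l) → x l = 0)
    (h : seqF L x = 0) : ∀ l : ℤ, x l = 0 := by
  intro l
  by_cases hl : l < 1 ∨ (L : ℤ) < l
  · exact hsupp l hl
  push_neg at hl
  set P : Polynomial (ZMod 2) :=
    ∑ m ∈ Finset.Icc (1 : ℤ) (L : ℤ), Polynomial.C (x m) * Polynomial.X ^ m.toNat with hP
  have h1 : seqF L x = algebraMap (Polynomial (ZMod 2)) F P := by
    rw [seqF, hP, map_sum]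
    refine Finset.sum_congr rfl fun m hm => ?_
    rw [Finset.mem_Icc] at hm
    rw [_root_.map_mul, ξ_eq_alg m (by omega)]
    rfl
  have hPz : P = 0 := RatFunc.algebraMap_injective (ZMod 2) (by rw [← h1, h, map_zero])
  have h2 : P.coeff l.toNat = x l := by
    rw [hP, Polynomial.finset_sum_coeff]
    rw [Finset.sum_eq_single l]
    · simp
    · intro m hm hml
      rw [Finset.mem_Icc] at hm
      rw [Polynomial.coeff_C_mul, Polynomial.coeff_X_pow, if_neg (by omega), mul_zero]
    · intro hl2
      rw [Finset.mem_Icc] at hl2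
      omega
  rw [hPz] at h2
  simpa using h2.symm

lemma perm_strictMono_eq_one {m : ℕ} (σ : Equiv.Perm (Fin m)) (h : StrictMono σ) :
    σ = 1 := by
  haveI : WellFoundedLT (Fin m) := Finite.to_wellFoundedLT
  have h2 : Set.range σ = Set.range (id : Fin m → Fin m) := by
    simp [σ.surjective.range_eq]
  have hfun : (σ : Fin m → Fin m) = id :=
    (StrictMono.range_inj (f := (σ : Fin m → Fin m)) (g := id) h
      (strictMono_id (α := Fin m))).mp h2
  ext x
  rw [show σ x = id x from congrFun hfun x]
  rfl

lemma unique_max {m : ℕ} (e : Fin m → Fin m → ℤ)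
    (hsup : ∀ v v' j j', v < v' → j < j' → e v j' + e v' j < e v j + e v' j')
    (σ : Equiv.Perm (Fin m)) (hσ : σ ≠ 1) :
    ∑ v, e (σ v) v < ∑ v, e v v := by
  classical
  set g : Equiv.Perm (Fin m) → ℤ := fun σ => ∑ v, e (σ v) v with hg
  have hswap : ∀ τ : Equiv.Perm (Fin m), ∀ v v' : Fin m, v < v' → τ v' < τ v →
      g τ < g (τ * Equiv.swap v v') := by
    intro τ v v' hvv hinv
    have hne : v ≠ v' := ne_of_lt hvv
    have key : g (τ * Equiv.swap v v') - g τ =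
        ∑ w, (e ((τ * Equiv.swap v v') w) w - e (τ w) w) := by
      rw [Finset.sum_sub_distrib]
    have hzero : ∀ w : Fin m, w ∉ ({v, v'} : Finset (Fin m)) →
        e ((τ * Equiv.swap v v') w) w - e (τ w) w = 0 := by
      intro w hw
      simp only [Finset.mem_insert, Finset.mem_singleton] at hw
      push_neg at hw
      have : Equiv.swap v v' w = w := Equiv.swap_apply_of_ne_of_ne hw.1 hw.2
      simp [Equiv.Perm.mul_apply, this]
    have hsum : ∑ w, (e ((τ * Equiv.swap v v') w) w - e (τ w) w) =
        ∑ w ∈ ({v, v'} : Finset (Fin m)), (e ((τ * Equiv.swap v v') w) w - e (τ w) w) :=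
      (Finset.sum_subset (Finset.subset_univ _) (fun w _ hw => hzero w hw)).symm
    have hpair : ∑ w ∈ ({v, v'} : Finset (Fin m)), (e ((τ * Equiv.swap v v') w) w - e (τ w) w)
        = (e (τ v') v - e (τ v) v) + (e (τ v) v' - e (τ v') v') := by
      rw [Finset.sum_pair hne]
      simp [Equiv.Perm.mul_apply, Equiv.swap_apply_left, Equiv.swap_apply_right]
    have hkey2 := hsup (τ v') (τ v) v v' hinv hvv
    omega
  have hinv : ∀ τ : Equiv.Perm (Fin m), τ ≠ 1 → ∃ v v', v < v' ∧ τ v' < τ v := by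
    intro τ hτ
    by_contra hno
    push_neg at hno
    apply hτ
    apply perm_strictMono_eq_one
    intro a b hab
    rcases lt_trichotomy (τ a) (τ b) with h | h | h
    · exact h
    · exact absurd (τ.injective h) (ne_of_lt hab)
    · exact absurd h (not_lt.mpr (hno a b hab))
  obtain ⟨σmax, -, hmax⟩ := Finset.exists_max_image Finset.univ g ⟨1, Finset.mem_univ 1⟩
  have hσmax : σmax = 1 := by
    by_contra hne
    obtain ⟨v, v', hvv, hvi⟩ := hinv σmax hne
    exact absurd (hmax _ (Finset.mem_univ _)) (not_le.mpr (hswap σmax v v' hvv hvi))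
  obtain ⟨v, v', hvv, hvi⟩ := hinv σ hσ
  have h1 : g σ < g (σ * Equiv.swap v v') := hswap σ v v' hvv hvi
  have h2 : g (σ * Equiv.swap v v') ≤ g σmax := hmax _ (Finset.mem_univ _)
  have h3 : g 1 = ∑ v, e v v := by simp [hg]
  rw [hσmax] at h2
  calc ∑ v, e (σ v) v = g σ := rfl
    _ < g 1 := lt_of_lt_of_le h1 h2
    _ = ∑ v, e v v := h3

lemma det_ne_zero {m : ℕ} (e : Fin m → Fin m → ℤ) (he0 : ∀ v j, 0 ≤ e v j)
    (hsup : ∀ v v' j j', v < v' → j < j' → e v j' + e v' j < e v j + e v' j') :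
    (Matrix.of (fun v j => ξ (e v j))).det ≠ 0 := by
  classical
  have hmax := unique_max e hsup
  set g : Equiv.Perm (Fin m) → ℤ := fun σ => ∑ v, e (σ v) v with hgdef
  have hg0 : ∀ σ, 0 ≤ g σ := fun σ => Finset.sum_nonneg fun v _ => he0 _ _
  set P : Polynomial (ZMod 2) := ∑ σ : Equiv.Perm (Fin m), Polynomial.X ^ (g σ).toNat with hP
  have hdet : (Matrix.of (fun v j => ξ (e v j))).det =
      algebraMap (Polynomial (ZMod 2)) F P := by
    rw [Matrix.det_apply, hP, map_sum]
    refine Finset.sum_congr rfl fun σ _ => ?_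
    have h1 : ∏ i, (Matrix.of (fun v j => ξ (e v j))) (σ i) i = ξ (g σ) := by
      rw [hgdef, ξ_sum]
      rfl
    have h2 : ξ (g σ) = algebraMap (Polynomial (ZMod 2)) F (Polynomial.X ^ (g σ).toNat) :=
      ξ_eq_alg _ (hg0 σ)
    rcases Int.units_eq_one_or (Equiv.Perm.sign σ) with hs | hs <;> rw [hs]
    · rw [one_smul, h1, h2]
    · rw [Units.neg_smul, one_smul, neg_eq, h1, h2]
  rw [hdet]
  intro hzero
  have hPz : P = 0 := RatFunc.algebraMap_injective (ZMod 2) (by rw [hzero, map_zero])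
  have hcoeff : P.coeff (g 1).toNat = 1 := by
    rw [hP, Polynomial.finset_sum_coeff]
    rw [Finset.sum_eq_single (1 : Equiv.Perm (Fin m))]
    · simp
    · intro σ _ hσ
      rw [Polynomial.coeff_X_pow, if_neg]
      have h1 : g σ < g 1 := by
        have := hmax σ hσ
        simpa [hgdef] using this
      have := hg0 σ
      omega
    · intro h
      exact absurd (Finset.mem_univ _) h
  rw [hPz] at hcoeff
  simp at hcoeff

lemma sum_Icc_fin {M : Type*} [AddCommMonoid M] (α : ℕ) (f : ℕ → M) :
    ∑ j ∈ Finset.Icc 1 α, f j = ∑ j : Fin α, f (j.1 + 1) := by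
  rw [Fin.sum_univ_eq_sum_range (fun i => f (i + 1)) α]
  refine Finset.sum_bij' (fun j _ => j - 1) (fun i _ => i + 1) ?_ ?_ ?_ ?_ ?_
  · intro a ha; rw [Finset.mem_Icc] at ha; rw [Finset.mem_range]; omega
  · intro a ha; rw [Finset.mem_range] at ha; rw [Finset.mem_Icc]; omega
  · intro a ha; rw [Finset.mem_Icc] at ha; omega
  · intro a ha; omega
  · intro a ha
    rw [Finset.mem_Icc] at ha
    congr 1
    omega

end
end Stmt13Aux

set_option maxHeartbeats 2000000 in
set_option synthInstance.maxHeartbeats 1000000 in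
open Polynomial Matrix Finset Stmt13Aux in
/-- Correctness of shift-XOR MSR decoding (`d = 2α`, `k = α + 1`).  The symmetric
`α × α` message matrices `s` (for `S`) and `tt` (for `T`) have as entries binary
sequences of length `L` (functions `ℤ → ZMod 2` vanishing outside `{1, …, L}`).
Node `i` stores the sequences `Y^i_u [l] = ∑_{j=1}^{α} s j u (l - t i j)
+ ∑_{j=1}^{α} tt j u (l - λ i - t i j)`, `u = 1, …, α`.  For any `k` node indices
`i_1 > i_2 > … > i_k`, the map `(S, T) ↦ (Y^{i_1}, …, Y^{i_k})` is injective: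
two pairs of symmetric message matrices producing the same data at the `k` chosen
nodes coincide. -/
theorem stmt13 (α n L : ℕ) (hα : 1 ≤ α) (hn : α + 1 ≤ n) (hL : 1 ≤ L)
    (t : ℕ → ℕ → ℤ) (lam : ℕ → ℤ)
    (ht0 : ∀ i j : ℕ, 1 ≤ i → i ≤ n → 1 ≤ j → j ≤ α → 0 ≤ t i j)
    (hlam0 : ∀ i : ℕ, 1 ≤ i → i ≤ n → 0 ≤ lam i)
    (hRID : RID n (2 * α) (msrExp α t lam))
    (s s' tt tt' : ℕ → ℕ → ℤ → ZMod 2)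
    (hsymS : ∀ v u : ℕ, 1 ≤ v → v ≤ α → 1 ≤ u → u ≤ α → s v u = s u v)
    (hsymS' : ∀ v u : ℕ, 1 ≤ v → v ≤ α → 1 ≤ u → u ≤ α → s' v u = s' u v)
    (hsymT : ∀ v u : ℕ, 1 ≤ v → v ≤ α → 1 ≤ u → u ≤ α → tt v u = tt u v)
    (hsymT' : ∀ v u : ℕ, 1 ≤ v → v ≤ α → 1 ≤ u → u ≤ α → tt' v u = tt' u v)
    (hsuppS : ∀ v u : ℕ, 1 ≤ v → v ≤ α → 1 ≤ u → u ≤ α →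
      ∀ l : ℤ, (l < 1 ∨ (L : ℤ) < l) → s v u l = 0)
    (hsuppS' : ∀ v u : ℕ, 1 ≤ v → v ≤ α → 1 ≤ u → u ≤ α →
      ∀ l : ℤ, (l < 1 ∨ (L : ℤ) < l) → s' v u l = 0)
    (hsuppT : ∀ v u : ℕ, 1 ≤ v → v ≤ α → 1 ≤ u → u ≤ α →
      ∀ l : ℤ, (l < 1 ∨ (L : ℤ) < l) → tt v u l = 0)
    (hsuppT' : ∀ v u : ℕ, 1 ≤ v → v ≤ α → 1 ≤ u → u ≤ α →
      ∀ l : ℤ, (l < 1 ∨ (L : ℤ) < l) → tt' v u l = 0)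
    (idx : ℕ → ℕ)
    (hidxRange : ∀ v : ℕ, 1 ≤ v → v ≤ α + 1 → 1 ≤ idx v ∧ idx v ≤ n)
    (hidxDec : ∀ v w : ℕ, 1 ≤ v → v < w → w ≤ α + 1 → idx w < idx v)
    (hY : ∀ v : ℕ, 1 ≤ v → v ≤ α + 1 → ∀ u : ℕ, 1 ≤ u → u ≤ α → ∀ l : ℤ,
      ((∑ j ∈ Finset.Icc 1 α, s j u (l - t (idx v) j))
          + ∑ j ∈ Finset.Icc 1 α, tt j u (l - lam (idx v) - t (idx v) j))
        = (∑ j ∈ Finset.Icc 1 α, s' j u (l - t (idx v) j))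
            + ∑ j ∈ Finset.Icc 1 α, tt' j u (l - lam (idx v) - t (idx v) j)) :
    (∀ v u : ℕ, 1 ≤ v → v ≤ α → 1 ≤ u → u ≤ α → ∀ l : ℤ, s v u l = s' v u l) ∧
      (∀ v u : ℕ, 1 ≤ v → v ≤ α → 1 ≤ u → u ≤ α → ∀ l : ℤ, tt v u l = tt' v u l) := by
    classical
  unfold RID msrExp at hRID
  -- difference sequences
  set dd : ℕ → ℕ → ℤ → ZMod 2 := fun j u l => s j u l - s' j u l with hdd
  set ee : ℕ → ℕ → ℤ → ZMod 2 := fun j u l => tt j u l - tt' j u l with hee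
  have hddsupp : ∀ v u : ℕ, 1 ≤ v → v ≤ α → 1 ≤ u → u ≤ α →
      ∀ l : ℤ, (l < 1 ∨ (L : ℤ) < l) → dd v u l = 0 := by
    intro v u h1 h2 h3 h4 l hl
    simp [hdd, hsuppS v u h1 h2 h3 h4 l hl, hsuppS' v u h1 h2 h3 h4 l hl]
  have heesupp : ∀ v u : ℕ, 1 ≤ v → v ≤ α → 1 ≤ u → u ≤ α →
      ∀ l : ℤ, (l < 1 ∨ (L : ℤ) < l) → ee v u l = 0 := by
    intro v u h1 h2 h3 h4 l hl
    simp [hee, hsuppT v u h1 h2 h3 h4 l hl, hsuppT' v u h1 h2 h3 h4 l hl]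
  have hddsym : ∀ v u : ℕ, 1 ≤ v → v ≤ α → 1 ≤ u → u ≤ α → dd v u = dd u v := by
    intro v u h1 h2 h3 h4
    funext l
    simp [hdd, hsymS v u h1 h2 h3 h4, hsymS' v u h1 h2 h3 h4]
  have heesym : ∀ v u : ℕ, 1 ≤ v → v ≤ α → 1 ≤ u → u ≤ α → ee v u = ee u v := by
    intro v u h1 h2 h3 h4
    funext l
    simp [hee, hsymT v u h1 h2 h3 h4, hsymT' v u h1 h2 h3 h4]
  -- pointwise zero equation
  have heq : ∀ v : ℕ, 1 ≤ v → v ≤ α + 1 → ∀ u : ℕ, 1 ≤ u → u ≤ α → ∀ l : ℤ,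
      (∑ j ∈ Finset.Icc 1 α, dd j u (l - t (idx v) j))
        + ∑ j ∈ Finset.Icc 1 α, ee j u (l - lam (idx v) - t (idx v) j) = 0 := by
    intro v hv1 hv2 u hu1 hu2 l
    have h := hY v hv1 hv2 u hu1 hu2 l
    simp only [hdd, hee, Finset.sum_sub_distrib]
    rw [sub_add_sub_comm]
    exact sub_eq_zero.mpr h
  -- equations over F
  have hFeq : ∀ v : ℕ, 1 ≤ v → v ≤ α + 1 → ∀ u : ℕ, 1 ≤ u → u ≤ α →
      (∑ j ∈ Finset.Icc 1 α, ξ (t (idx v) j) * seqF L (dd j u))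
        + ξ (lam (idx v)) * ∑ j ∈ Finset.Icc 1 α, ξ (t (idx v) j) * seqF L (ee j u) = 0 := by
    intro v hv1 hv2 u hu1 hu2
    obtain ⟨hi1, hi2⟩ := hidxRange v hv1 hv2
    set i := idx v with hi
    set R : Finset ℤ :=
      ((Finset.Icc 1 α).biUnion fun j => Finset.Icc (1 + t i j) ((L : ℤ) + t i j)) ∪
      ((Finset.Icc 1 α).biUnion fun j =>
        Finset.Icc (1 + (lam i + t i j)) ((L : ℤ) + (lam i + t i j))) with hRdef
    have key : (0 : F) = ∑ m ∈ R,
        χ ((∑ j ∈ Finset.Icc 1 α, dd j u (m - t i j))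
          + ∑ j ∈ Finset.Icc 1 α, ee j u (m - lam i - t i j)) * ξ m := by
      rw [Finset.sum_congr rfl (fun m _ => ?_)]
      · rw [Finset.sum_const_zero]
      · rw [heq v hv1 hv2 u hu1 hu2 m, map_zero, zero_mul]
    have expand : ∑ m ∈ R,
        χ ((∑ j ∈ Finset.Icc 1 α, dd j u (m - t i j))
          + ∑ j ∈ Finset.Icc 1 α, ee j u (m - lam i - t i j)) * ξ m
        = (∑ j ∈ Finset.Icc 1 α, ξ (t i j) * seqF L (dd j u))
          + ∑ j ∈ Finset.Icc 1 α, (ξ (lam i + t i j)) * seqF L (ee j u) := by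
      have step1 : ∀ m : ℤ,
          χ ((∑ j ∈ Finset.Icc 1 α, dd j u (m - t i j))
            + ∑ j ∈ Finset.Icc 1 α, ee j u (m - lam i - t i j)) * ξ m
          = (∑ j ∈ Finset.Icc 1 α, χ (dd j u (m - t i j)) * ξ m)
            + ∑ j ∈ Finset.Icc 1 α, χ (ee j u (m - (lam i + t i j))) * ξ m := by
        intro m
        rw [map_add, map_sum, map_sum, add_mul, Finset.sum_mul, Finset.sum_mul]
        congr 1
        refine Finset.sum_congr rfl fun j _ => ?_
        rw [sub_sub]
      rw [Finset.sum_congr rfl fun m _ => step1 m]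
      rw [Finset.sum_add_distrib, Finset.sum_comm, Finset.sum_comm (s := R)]
      congr 1
      · refine Finset.sum_congr rfl fun j hj => ?_
        refine shift_sum L (dd j u) ?_ (t i j) R ?_
        · rw [Finset.mem_Icc] at hj
          exact hddsupp j u hj.1 hj.2 hu1 hu2
        · exact (Finset.subset_biUnion_of_mem
            (fun j => Finset.Icc (1 + t i j) ((L : ℤ) + t i j)) hj).trans
            Finset.subset_union_left
      · refine Finset.sum_congr rfl fun j hj => ?_
        refine shift_sum L (ee j u) ?_ (lam i + t i j) R ?_
        · rw [Finset.mem_Icc] at hj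
          exact heesupp j u hj.1 hj.2 hu1 hu2
        · exact (Finset.subset_biUnion_of_mem
            (fun j => Finset.Icc (1 + (lam i + t i j)) ((L : ℤ) + (lam i + t i j))) hj).trans
            Finset.subset_union_right
    rw [expand] at key
    rw [Finset.mul_sum]
    have key2 : ∑ j ∈ Finset.Icc 1 α, ξ (lam i + t i j) * seqF L (ee j u)
        = ∑ j ∈ Finset.Icc 1 α, ξ (lam i) * (ξ (t i j) * seqF L (ee j u)) :=
      Finset.sum_congr rfl fun j _ => by rw [ξ_add, mul_assoc]
    rw [key2] at key
    exact key.symm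
  -- matrices over F
  set Φm : Matrix (Fin (α+1)) (Fin α) F :=
    Matrix.of (fun v j => ξ (t (idx (v.1+1)) (j.1+1))) with hΦm
  set Sm : Matrix (Fin α) (Fin α) F :=
    Matrix.of (fun j u => seqF L (dd (j.1+1) (u.1+1))) with hSmdef
  set Tm : Matrix (Fin α) (Fin α) F :=
    Matrix.of (fun j u => seqF L (ee (j.1+1) (u.1+1))) with hTmdef
  set ℓv : Fin (α+1) → F := fun v => ξ (lam (idx (v.1+1))) with hℓv
  have hM : ∀ (v : Fin (α+1)) (u : Fin α),
      (Φm * Sm) v u + ℓv v * (Φm * Tm) v u = 0 := by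
    intro v u
    have h := hFeq (v.1+1) (by omega) (by omega) (u.1+1) (by omega) (by omega)
    rw [sum_Icc_fin α (fun j => ξ (t (idx (v.1+1)) j) * seqF L (dd j (u.1+1)))] at h
    rw [sum_Icc_fin α (fun j => ξ (t (idx (v.1+1)) j) * seqF L (ee j (u.1+1)))] at h
    simpa only [Matrix.mul_apply, hΦm, hSmdef, hTmdef, hℓv, Matrix.of_apply] using h
  -- strict monotonicity of lam
  have lam_lt : ∀ i i' : ℕ, 1 ≤ i → i < i' → i' ≤ n → lam i < lam i' := by
    intro i i' h1 h2 h3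
    have h := (hRID i i' 1 (1 + α) h1 h2 h3 le_rfl (by omega) (by omega)).2.2
    rw [if_pos hα, if_pos hα, if_neg (by omega), if_neg (by omega)] at h
    rw [show 1 + α - α = 1 from by omega] at h
    omega
  -- values ℓv are pairwise distinct
  have hℓne : ∀ v w : Fin (α+1), v ≠ w → ℓv v ≠ ℓv w := by
    intro v w hvw
    have hv := hidxRange (v.1+1) (by omega) (by omega)
    have hw := hidxRange (w.1+1) (by omega) (by omega)
    have hne : lam (idx (v.1+1)) ≠ lam (idx (w.1+1)) := by
      rcases lt_trichotomy v.1 w.1 with h | h | h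
      · have := hidxDec (v.1+1) (w.1+1) (by omega) (by omega) (by omega)
        exact ne_of_gt (lam_lt _ _ hw.1 this hv.2)
      · exact absurd (Fin.ext h) hvw
      · have := hidxDec (w.1+1) (v.1+1) (by omega) (by omega) (by omega)
        exact ne_of_lt (lam_lt _ _ hv.1 this hw.2)
    exact fun hc => hne (ξ_inj hc)
  -- every α×α row-submatrix of Φm is nonsingular
  have detNZ : ∀ r : Fin α → Fin (α+1), Function.Injective r →
      (Matrix.of (fun v j => Φm (r v) j)).det ≠ 0 := by
    intro r hr
    -- sort the rows
    have hmono : Monotone (r ∘ Tuple.sort r) := Tuple.monotone_sort r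
    have hsm : StrictMono (r ∘ Tuple.sort r) :=
      hmono.strictMono_of_injective (hr.comp (Tuple.sort r).injective)
    set r' : Fin α → Fin (α+1) := r ∘ Tuple.sort r with hr'
    have hperm1 : (Matrix.of (fun v j => Φm (r v) j)).submatrix (Tuple.sort r) id
        = Matrix.of (fun v j => Φm (r' v) j) := rfl
    have hstep1 : (Matrix.of (fun v j => Φm (r' v) j)).det ≠ 0 →
        (Matrix.of (fun v j => Φm (r v) j)).det ≠ 0 := by
      intro h hc
      apply h
      rw [← hperm1, Matrix.det_permute, hc, mul_zero]
    apply hstep1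
    -- reverse the rows
    have hperm2 : (Matrix.of (fun v j => Φm (r' v) j)).submatrix
        (Fin.revPerm : Equiv.Perm (Fin α)) id
        = Matrix.of (fun v j => Φm (r' (Fin.rev v)) j) := rfl
    have hstep2 : (Matrix.of (fun v j => Φm (r' (Fin.rev v)) j)).det ≠ 0 →
        (Matrix.of (fun v j => Φm (r' v) j)).det ≠ 0 := by
      intro h hc
      apply h
      rw [← hperm2, Matrix.det_permute, hc, mul_zero]
    apply hstep2
    -- now apply the supermodularity determinant lemma
    set e : Fin α → Fin α → ℤ :=
      fun v j => t (idx ((r' (Fin.rev v)).1+1)) (j.1+1) with he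
    have hrange : ∀ v : Fin α, 1 ≤ idx ((r' v).1+1) ∧ idx ((r' v).1+1) ≤ n := by
      intro v
      exact hidxRange _ (by omega) (by omega)
    have he0 : ∀ v j, 0 ≤ e v j := by
      intro v j
      exact ht0 _ _ (hrange (Fin.rev v)).1 (hrange (Fin.rev v)).2 (by omega) (by omega)
    have hsup : ∀ v v' j j' : Fin α, v < v' → j < j' →
        e v j' + e v' j < e v j + e v' j' := by
      intro v v' j j' hv hj
      have hrev : Fin.rev v' < Fin.rev v := by
        rw [Fin.rev_lt_rev]
        exact hv
      have hrr : r' (Fin.rev v') < r' (Fin.rev v) := hsm hrev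
      set i := idx ((r' (Fin.rev v)).1+1) with hidef
      set i' := idx ((r' (Fin.rev v')).1+1) with hi'def
      have hii : i < i' := hidxDec _ _ (by omega) (by omega) (by omega)
      have h := (hRID i i' (j.1+1) (j'.1+1) (hrange (Fin.rev v)).1 hii
        (hrange (Fin.rev v')).2 (by omega) (by omega) (by omega)).2.2
      rw [if_pos (by omega), if_pos (by omega), if_pos (by omega), if_pos (by omega)] at h
      have hg1 : e v j' = t i (j'.1+1) := rfl
      have hg2 : e v' j = t i' (j.1+1) := rfl
      have hg3 : e v j = t i (j.1+1) := rfl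
      have hg4 : e v' j' = t i' (j'.1+1) := rfl
      omega
    have := det_ne_zero e he0 hsup
    exact this
  -- the top α×α submatrix and the coefficient vector of the last row
  set Φhat : Matrix (Fin α) (Fin α) F :=
    Matrix.of (fun v j => Φm (Fin.castSucc v) j) with hΦhatdef
  have hdetΦ : Φhat.det ≠ 0 := detNZ Fin.castSucc (Fin.castSucc_injective α)
  have hunit : IsUnit Φhat.det := isUnit_iff_ne_zero.mpr hdetΦ
  have hunitT : IsUnit Φhatᵀ.det := by rw [Matrix.det_transpose]; exact hunit
  set φL : Fin α → F := fun j => Φm (Fin.last α) j with hφL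
  set c : Fin α → F := Matrix.vecMul φL Φhat⁻¹ with hcdef
  have hcΦ : Matrix.vecMul c Φhat = φL := by
    rw [hcdef, Matrix.vecMul_vecMul, Matrix.nonsing_inv_mul _ hunit, Matrix.vecMul_one]
  have hlast : ∀ j : Fin α, φL j = ∑ p, c p * Φhat p j := by
    intro j
    rw [← hcΦ]
    simp [Matrix.vecMul, dotProduct]
  have hcne : ∀ j : Fin α, c j ≠ 0 := by
    intro j
    have hsum : φL = ∑ k, c k • Φhat k := by
      funext q
      rw [hlast q, Finset.sum_apply]
      exact Finset.sum_congr rfl fun k _ => by simp [smul_eq_mul]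
    have hdetU : (Φhat.updateRow j φL).det = c j • Φhat.det := by
      rw [hsum, Matrix.det_updateRow_sum]
    set rj : Fin α → Fin (α+1) := fun v => if v = j then Fin.last α else Fin.castSucc v with hrj
    have hUeq : Φhat.updateRow j φL = Matrix.of (fun v q => Φm (rj v) q) := by
      funext v q
      rw [Matrix.updateRow_apply]
      by_cases hv : v = j
      · simp [hv, hrj, hφL]
      · simp [hv, hrj, hΦhatdef]
    have hinj : Function.Injective rj := by
      intro v1 v2 h12
      simp only [hrj] at h12
      by_cases h1 : v1 = j <;> by_cases h2 : v2 = j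
      · rw [h1, h2]
      · rw [if_pos h1, if_neg h2] at h12
        exact absurd h12.symm (Fin.castSucc_lt_last v2).ne
      · rw [if_neg h1, if_pos h2] at h12
        exact absurd h12 (Fin.castSucc_lt_last v1).ne
      · rw [if_neg h1, if_neg h2] at h12
        exact Fin.castSucc_injective α h12
    have hne := detNZ rj hinj
    rw [← hUeq, hdetU] at hne
    intro hcj
    rw [hcj, zero_smul] at hne
    exact hne rfl
  -- the key recovery step
  have recover : ∀ M : Matrix (Fin α) (Fin α) F,
      (∀ v w : Fin (α+1), v ≠ w → (Φm * M * Φmᵀ) v w = 0) → M = 0 := by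
    intro M hoff
    set G : Matrix (Fin α) (Fin α) F := Φhat * M * Φhatᵀ with hGdef
    have hGentry : ∀ p q : Fin α,
        G p q = (Φm * M * Φmᵀ) (Fin.castSucc p) (Fin.castSucc q) := by
      intro p q
      simp only [hGdef, Matrix.mul_apply, Matrix.transpose_apply, hΦhatdef, Matrix.of_apply]
    have hGoff : ∀ p q : Fin α, p ≠ q → G p q = 0 := by
      intro p q hpq
      rw [hGentry]
      exact hoff _ _ (fun h => hpq (Fin.castSucc_injective α h))
    have hrow : ∀ q : Fin α, ∑ p, c p * G p q = 0 := by
      intro q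
      have h0 : (Φm * M * Φmᵀ) (Fin.last α) (Fin.castSucc q) = 0 :=
        hoff _ _ (Fin.castSucc_lt_last q).ne'
      have h1 : (Φm * M * Φmᵀ) (Fin.last α) (Fin.castSucc q)
          = ∑ jy, Φm (Fin.last α) jy * (M * Φmᵀ) jy (Fin.castSucc q) := by
        rw [Matrix.mul_assoc, Matrix.mul_apply]
      have h2 : ∀ p : Fin α, (Φhat * (M * Φmᵀ)) p (Fin.castSucc q) = G p q := by
        intro p
        simp only [hGdef, Matrix.mul_assoc, Matrix.mul_apply, Matrix.transpose_apply,
          hΦhatdef, Matrix.of_apply]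
      calc ∑ p, c p * G p q
          = ∑ p, c p * (Φhat * (M * Φmᵀ)) p (Fin.castSucc q) := by
            exact Finset.sum_congr rfl fun p _ => by rw [h2]
        _ = ∑ p, c p * ∑ jy, Φhat p jy * (M * Φmᵀ) jy (Fin.castSucc q) := by
            exact Finset.sum_congr rfl fun p _ => by rw [Matrix.mul_apply]
        _ = ∑ p, ∑ jy, c p * (Φhat p jy * (M * Φmᵀ) jy (Fin.castSucc q)) := by
            exact Finset.sum_congr rfl fun p _ => by rw [Finset.mul_sum]
        _ = ∑ jy, ∑ p, c p * (Φhat p jy * (M * Φmᵀ) jy (Fin.castSucc q)) :=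
            Finset.sum_comm
        _ = ∑ jy, (∑ p, c p * Φhat p jy) * (M * Φmᵀ) jy (Fin.castSucc q) := by
            refine Finset.sum_congr rfl fun jy _ => ?_
            rw [Finset.sum_mul]
            exact Finset.sum_congr rfl fun p _ => by ring
        _ = ∑ jy, Φm (Fin.last α) jy * (M * Φmᵀ) jy (Fin.castSucc q) := by
            refine Finset.sum_congr rfl fun jy _ => ?_
            rw [← hlast jy]
        _ = 0 := by rw [← h1, h0]
    have hGdiag : ∀ q : Fin α, G q q = 0 := by
      intro q
      have h := hrow q
      rw [Finset.sum_eq_single q] at h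
      · exact (mul_eq_zero.mp h).resolve_left (hcne q)
      · intro p _ hpq
        rw [hGoff p q hpq, mul_zero]
      · intro h'
        exact absurd (Finset.mem_univ q) h'
    have hG0 : G = 0 := by
      funext p q
      by_cases hpq : p = q
      · rw [hpq]
        exact hGdiag q
      · exact hGoff p q hpq
    have : M = Φhat⁻¹ * (Φhat * M * Φhatᵀ) * Φhatᵀ⁻¹ := by
      calc M = (Φhat⁻¹ * Φhat) * M * (Φhatᵀ * Φhatᵀ⁻¹) := by
            rw [Matrix.nonsing_inv_mul _ hunit, Matrix.mul_nonsing_inv _ hunitT,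
              Matrix.one_mul, Matrix.mul_one]
        _ = Φhat⁻¹ * (Φhat * M * Φhatᵀ) * Φhatᵀ⁻¹ := by
            simp only [Matrix.mul_assoc]
    rw [this, ← hGdef, hG0, Matrix.mul_zero, Matrix.zero_mul]
  -- symmetry of the message matrices
  have hSmT : Smᵀ = Sm := by
    funext a b
    rw [Matrix.transpose_apply]
    simp only [hSmdef, Matrix.of_apply]
    rw [hddsym (b.1+1) (a.1+1) (by omega) (by omega) (by omega) (by omega)]
  have hTmT : Tmᵀ = Tm := by
    funext a b
    rw [Matrix.transpose_apply]
    simp only [hTmdef, Matrix.of_apply]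
    rw [heesym (b.1+1) (a.1+1) (by omega) (by omega) (by omega) (by omega)]
  -- the big product matrices
  set A2 : Matrix (Fin (α+1)) (Fin (α+1)) F := Φm * Sm * Φmᵀ with hA2
  set B2 : Matrix (Fin (α+1)) (Fin (α+1)) F := Φm * Tm * Φmᵀ with hB2
  have hABentry : ∀ v w : Fin (α+1), A2 v w + ℓv v * B2 v w = 0 := by
    intro v w
    have hA : A2 v w = ∑ u, (Φm * Sm) v u * Φm w u := by
      rw [hA2, Matrix.mul_apply]
      exact Finset.sum_congr rfl fun u _ => by rw [Matrix.transpose_apply]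
    have hB : B2 v w = ∑ u, (Φm * Tm) v u * Φm w u := by
      rw [hB2, Matrix.mul_apply]
      exact Finset.sum_congr rfl fun u _ => by rw [Matrix.transpose_apply]
    calc A2 v w + ℓv v * B2 v w
        = ∑ u, ((Φm * Sm) v u + ℓv v * (Φm * Tm) v u) * Φm w u := by
          rw [hA, hB, Finset.mul_sum, ← Finset.sum_add_distrib]
          exact Finset.sum_congr rfl fun u _ => by ring
      _ = 0 := by
          rw [Finset.sum_congr rfl fun u _ => by rw [hM v u, zero_mul]]
          exact Finset.sum_const_zero
  have hA2sym : ∀ v w : Fin (α+1), A2 v w = A2 w v := by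
    have hsym : A2ᵀ = A2 := by
      rw [hA2, Matrix.transpose_mul, Matrix.transpose_mul, Matrix.transpose_transpose,
        hSmT, Matrix.mul_assoc]
    intro v w
    exact congrFun (congrFun hsym w) v
  have hB2sym : ∀ v w : Fin (α+1), B2 v w = B2 w v := by
    have hsym : B2ᵀ = B2 := by
      rw [hB2, Matrix.transpose_mul, Matrix.transpose_mul, Matrix.transpose_transpose,
        hTmT, Matrix.mul_assoc]
    intro v w
    exact congrFun (congrFun hsym w) v
  have hBoffz : ∀ v w : Fin (α+1), v ≠ w → B2 v w = 0 := by
    intro v w hvw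
    have h1 := hABentry v w
    have h2 := hABentry w v
    rw [← hA2sym v w, ← hB2sym v w] at h2
    have h3 : (ℓv v - ℓv w) * B2 v w = 0 := by ring_nf; linear_combination h1 - h2
    rcases mul_eq_zero.mp h3 with h | h
    · exact absurd (sub_eq_zero.mp h) (hℓne v w hvw)
    · exact h
  have hAoffz : ∀ v w : Fin (α+1), v ≠ w → A2 v w = 0 := by
    intro v w hvw
    have h1 := hABentry v w
    rw [hBoffz v w hvw, mul_zero, add_zero] at h1
    exact h1
  -- recover the message matrices
  have hSm0 : Sm = 0 := recover Sm (by rw [← hA2]; exact hAoffz)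
  have hTm0 : Tm = 0 := recover Tm (by rw [← hB2]; exact hBoffz)
  -- final extraction
  constructor
  · intro v u hv1 hv2 hu1 hu2 l
    have h0 := congrFun (congrFun hSm0 ⟨v - 1, by omega⟩) ⟨u - 1, by omega⟩
    simp only [hSmdef, Matrix.of_apply, Matrix.zero_apply] at h0
    rw [show v - 1 + 1 = v from by omega, show u - 1 + 1 = u from by omega] at h0
    have hz := seqF_eq_zero L (dd v u) (hddsupp v u hv1 hv2 hu1 hu2) h0 l
    simp only [hdd] at hz
    exact sub_eq_zero.mp hz
  · intro v u hv1 hv2 hu1 hu2 l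
    have h0 := congrFun (congrFun hTm0 ⟨v - 1, by omega⟩) ⟨u - 1, by omega⟩
    simp only [hTmdef, Matrix.of_apply, Matrix.zero_apply] at h0
    rw [show v - 1 + 1 = v from by omega, show u - 1 + 1 = u from by omega] at h0
    have hz := seqF_eq_zero L (ee v u) (heesupp v u hv1 hv2 hu1 hu2) h0 l
    simp only [hee] at hz
    exact sub_eq_zero.mp hz
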